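/- Let B be an n × m real matrix smoothly depending on a parameter, with B^T B invertible, and let P = B(B^T B)^{−1}B^T be the orthogonal projection onto the column space of B. Then the derivative of P with respect to the parameter equals (I − P) Ḃ (B^T B)^{−1} B^T + B (B^T B)^{−1} Ḃ^T (I − P), where Ḃ is the derivative of B. -/

import Mathlib

open Matrix

private lemma entry_mul {n m p : ℕ} {f : ℝ → Matrix (Fin n) (Fin m) ℝ}
    {g : ℝ → Matrix (Fin m) (Fin p) ℝ} {f' : Matrix (Fin n) (Fin m) ℝ}
    {g' : Matrix (Fin m) (Fin p) ℝ} {t₀ : ℝ}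
    (hf : ∀ i j, HasDerivAt (fun t => f t i j) (f' i j) t₀)
    (hg : ∀ i j, HasDerivAt (fun t => g t i j) (g' i j) t₀) :
    ∀ i j, HasDerivAt (fun t => (f t * g t) i j) ((f' * g t₀ + f t₀ * g') i j) t₀ := by
  intro i j
  simp only [Matrix.mul_apply, Matrix.add_apply]
  rw [← Finset.sum_add_distrib]
  exact HasDerivAt.fun_sum fun k _ => (hf i k).mul (hg k j)

private lemma det_diff {p : ℕ} {M : ℝ → Matrix (Fin p) (Fin p) ℝ} {t₀ : ℝ}
    (h : ∀ i j, DifferentiableAt ℝ (fun t => M t i j) t₀) :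
    DifferentiableAt ℝ (fun t => (M t).det) t₀ := by
  simp only [Matrix.det_apply']
  exact DifferentiableAt.fun_sum fun σ _ =>
    (differentiableAt_const _).mul (DifferentiableAt.fun_finsetProd fun k _ => h (σ k) k)

private lemma inv_entry_diff {p : ℕ} {M : ℝ → Matrix (Fin p) (Fin p) ℝ} {t₀ : ℝ}
    (h : ∀ i j, DifferentiableAt ℝ (fun t => M t i j) t₀)
    (hu : IsUnit (M t₀)) :
    ∀ i j, DifferentiableAt ℝ (fun t => (M t)⁻¹ i j) t₀ := by
  intro i j
  have heq : (fun t => (M t)⁻¹ i j) =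
      fun t => ((M t).det)⁻¹ * (M t).adjugate i j := by
    funext t
    rw [Matrix.inv_def, Matrix.smul_apply, smul_eq_mul, Ring.inverse_eq_inv']
  rw [heq]
  have hdet : (M t₀).det ≠ 0 := by
    have := (Matrix.isUnit_iff_isUnit_det _).mp hu
    exact this.ne_zero
  refine ((det_diff h).inv hdet).mul ?_
  have hadj : (fun t => (M t).adjugate i j) =
      fun t => ((M t).updateRow j (Pi.single i 1)).det := by
    funext t; rw [Matrix.adjugate_apply]
  rw [hadj]
  apply det_diff
  intro k l
  by_cases hk : k = j
  · simp [Matrix.updateRow_apply, hk]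
  · simpa [Matrix.updateRow_apply, hk] using h k l

/-- Derivative of the projection matrix `P = B(BᵀB)⁻¹Bᵀ`: if `B` depends
differentiably (entrywise) on a real parameter with derivative `Ḃ` and `BᵀB` is
invertible on the domain, then
`∂P = (I - P) Ḃ (BᵀB)⁻¹ Bᵀ + B (BᵀB)⁻¹ Ḃᵀ (I - P)`. -/
theorem stmt_10 (n m : ℕ) (B : ℝ → Matrix (Fin n) (Fin m) ℝ)
    (B' : Matrix (Fin n) (Fin m) ℝ) (t₀ : ℝ)
    (hB : ∀ i j, HasDerivAt (fun t => B t i j) (B' i j) t₀)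
    (hinv : ∀ t : ℝ, IsUnit ((B t)ᵀ * B t))
    (P : ℝ → Matrix (Fin n) (Fin n) ℝ)
    (hP : ∀ t, P t = B t * ((B t)ᵀ * B t)⁻¹ * (B t)ᵀ) :
    ∀ i j, HasDerivAt (fun t => P t i j)
      ((((1 - P t₀) * B' * ((B t₀)ᵀ * B t₀)⁻¹ * (B t₀)ᵀ +
          B t₀ * ((B t₀)ᵀ * B t₀)⁻¹ * B'ᵀ * (1 - P t₀) :
            Matrix (Fin n) (Fin n) ℝ)) i j) t₀ := by
  have hBT : ∀ i j, HasDerivAt (fun t => (B t)ᵀ i j) (B'ᵀ i j) t₀ := by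
    intro i j; simpa [Matrix.transpose_apply] using hB j i
  set N' : Matrix (Fin m) (Fin m) ℝ := B'ᵀ * B t₀ + (B t₀)ᵀ * B' with hN'
  have hN : ∀ i j, HasDerivAt (fun t => ((B t)ᵀ * B t) i j) (N' i j) t₀ :=
    entry_mul hBT hB
  have hdet : IsUnit ((B t₀)ᵀ * B t₀).det :=
    (Matrix.isUnit_iff_isUnit_det _).mp (hinv t₀)
  have hinvdiff : ∀ i j, DifferentiableAt ℝ (fun t => (((B t)ᵀ * B t)⁻¹) i j) t₀ :=
    inv_entry_diff (fun i j => (hN i j).differentiableAt) (hinv t₀)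
  set Dm : Matrix (Fin m) (Fin m) ℝ :=
    Matrix.of (fun i j => deriv (fun t => (((B t)ᵀ * B t)⁻¹) i j) t₀) with hDmdef
  have hD : ∀ i j, HasDerivAt (fun t => (((B t)ᵀ * B t)⁻¹) i j) (Dm i j) t₀ :=
    fun i j => (hinvdiff i j).hasDerivAt
  -- derivative of N * N⁻¹ = 1 gives formula for Dm
  have h1 : ∀ i j, HasDerivAt (fun t => (((B t)ᵀ * B t) * ((B t)ᵀ * B t)⁻¹) i j)
      ((N' * ((B t₀)ᵀ * B t₀)⁻¹ + ((B t₀)ᵀ * B t₀) * Dm) i j) t₀ :=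
    entry_mul hN hD
  have hzero : N' * ((B t₀)ᵀ * B t₀)⁻¹ + ((B t₀)ᵀ * B t₀) * Dm = 0 := by
    ext i j
    have hconst : (fun t => (((B t)ᵀ * B t) * ((B t)ᵀ * B t)⁻¹) i j) =
        fun _ => (1 : Matrix (Fin m) (Fin m) ℝ) i j := by
      funext t
      rw [Matrix.mul_nonsing_inv _ ((Matrix.isUnit_iff_isUnit_det _).mp (hinv t))]
    have h2 := h1 i j
    rw [hconst] at h2
    have := h2.unique (hasDerivAt_const _ _)
    simpa using this
  have hND : ((B t₀)ᵀ * B t₀) * Dm = -(N' * ((B t₀)ᵀ * B t₀)⁻¹) :=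
    eq_neg_of_add_eq_zero_right hzero
  have hDm : Dm = -(((B t₀)ᵀ * B t₀)⁻¹ * (N' * ((B t₀)ᵀ * B t₀)⁻¹)) := by
    calc Dm = ((B t₀)ᵀ * B t₀)⁻¹ * (((B t₀)ᵀ * B t₀) * Dm) := by
          rw [← Matrix.mul_assoc, Matrix.nonsing_inv_mul _ hdet, Matrix.one_mul]
      _ = -(((B t₀)ᵀ * B t₀)⁻¹ * (N' * ((B t₀)ᵀ * B t₀)⁻¹)) := by
          rw [hND, Matrix.mul_neg]
  -- derivative of P entrywise
  have hPd : ∀ i j, HasDerivAt (fun t => (B t * ((B t)ᵀ * B t)⁻¹ * (B t)ᵀ) i j)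
      (((B' * ((B t₀)ᵀ * B t₀)⁻¹ + B t₀ * Dm) * (B t₀)ᵀ +
        (B t₀ * ((B t₀)ᵀ * B t₀)⁻¹) * B'ᵀ) i j) t₀ :=
    entry_mul (entry_mul hB hD) hBT
  have hfun : ∀ i j, (fun t => P t i j) = fun t => (B t * ((B t)ᵀ * B t)⁻¹ * (B t)ᵀ) i j := by
    intro i j; funext t; rw [hP t]
  have hval : (B' * ((B t₀)ᵀ * B t₀)⁻¹ + B t₀ * Dm) * (B t₀)ᵀ +
        (B t₀ * ((B t₀)ᵀ * B t₀)⁻¹) * B'ᵀ =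
      (1 - P t₀) * B' * ((B t₀)ᵀ * B t₀)⁻¹ * (B t₀)ᵀ +
        B t₀ * ((B t₀)ᵀ * B t₀)⁻¹ * B'ᵀ * (1 - P t₀) := by
    rw [hDm, hN', hP t₀]
    simp only [Matrix.mul_add, Matrix.add_mul, Matrix.mul_sub, Matrix.sub_mul,
      Matrix.one_mul, Matrix.mul_one, Matrix.neg_mul, Matrix.mul_neg, Matrix.mul_assoc]
    abel
  intro i j
  rw [hfun i j, ← hval]
  exact hPd i j
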